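/- If Q = s(n⊗n − (1/3)I) is a C² uniaxial tensor field with |n| ≡ 1 satisfying L ΔQᵢⱼ = (1/3)(2c²s² − b²s − 3a²)Qᵢⱼ at a point where s ≠ 0, then at that point 2(∂ₖs)(∂ₖnⱼ) + sΔnⱼ + s|∇n|²nⱼ = 0 for j = 1,2,3, equivalently ∂ₖ(s²∂ₖnⱼ) + s²|∇n|²nⱼ = 0. -/

import Mathlib

/-- Partial derivative in direction `k` of a function on `ℝ³ = Fin 3 → ℝ`. -/
noncomputable def pd (k : Fin 3) (f : (Fin 3 → ℝ) → ℝ) (x : Fin 3 → ℝ) : ℝ :=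
  fderiv ℝ f x (Pi.single k 1)

/-- Laplacian of a function on `ℝ³`. -/
noncomputable def lap (f : (Fin 3 → ℝ) → ℝ) (x : Fin 3 → ℝ) : ℝ :=
  ∑ k, pd k (fun y => pd k f y) x

lemma pd_const (k : Fin 3) (c : ℝ) (y : Fin 3 → ℝ) : pd k (fun _ => c) y = 0 := by
  simp [pd]

lemma pd_add {f g : (Fin 3 → ℝ) → ℝ} (hf : Differentiable ℝ f) (hg : Differentiable ℝ g)
    (k : Fin 3) (y : Fin 3 → ℝ) :
    pd k (fun z => f z + g z) y = pd k f y + pd k g y := by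
  unfold pd
  rw [fderiv_fun_add (hf y) (hg y)]
  simp

lemma pd_mul {f g : (Fin 3 → ℝ) → ℝ} (hf : Differentiable ℝ f) (hg : Differentiable ℝ g)
    (k : Fin 3) (y : Fin 3 → ℝ) :
    pd k (fun z => f z * g z) y = pd k f y * g y + f y * pd k g y := by
  unfold pd
  rw [fderiv_fun_mul (hf y) (hg y)]
  simp
  ring

lemma pd_sum {f : Fin 3 → (Fin 3 → ℝ) → ℝ} (hf : ∀ i, Differentiable ℝ (f i))
    (k : Fin 3) (y : Fin 3 → ℝ) :
    pd k (fun z => ∑ i, f i z) y = ∑ i, pd k (f i) y := by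
  unfold pd
  rw [fderiv_fun_sum (fun i _ => (hf i) y)]
  simp

lemma pd_cd {f : (Fin 3 → ℝ) → ℝ} (hf : ContDiff ℝ 2 f) (k : Fin 3) :
    ContDiff ℝ 1 (fun y => pd k f y) :=
  (hf.fderiv_right (by norm_num)).clm_apply contDiff_const

lemma lap_mul {f g : (Fin 3 → ℝ) → ℝ} (hf : ContDiff ℝ 2 f) (hg : ContDiff ℝ 2 g)
    (x : Fin 3 → ℝ) :
    lap (fun y => f y * g y) x
      = lap f x * g x + 2 * ∑ k, pd k f x * pd k g x + f x * lap g x := by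
  have hfd : Differentiable ℝ f := hf.differentiable two_ne_zero
  have hgd : Differentiable ℝ g := hg.differentiable two_ne_zero
  have key : ∀ k : Fin 3, pd k (fun y => pd k (fun z => f z * g z) y) x
      = pd k (fun y => pd k f y) x * g x + 2 * (pd k f x * pd k g x)
        + f x * pd k (fun y => pd k g y) x := by
    intro k
    have e1 : (fun y => pd k (fun z => f z * g z) y)
        = fun y => pd k f y * g y + f y * pd k g y :=
      funext fun y => pd_mul hfd hgd k y
    have hdf : Differentiable ℝ (fun y => pd k f y) := (pd_cd hf k).differentiable one_ne_zero
    have hdg : Differentiable ℝ (fun y => pd k g y) := (pd_cd hg k).differentiable one_ne_zero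
    rw [e1, pd_add (f := fun y => pd k f y * g y) (g := fun y => f y * pd k g y) (hdf.mul hgd) (hfd.mul hdg), pd_mul hdf hgd, pd_mul hfd hdg]
    ring
  unfold lap
  rw [Finset.sum_congr rfl fun k _ => key k]
  rw [Finset.sum_add_distrib, Finset.sum_add_distrib, ← Finset.sum_mul, ← Finset.mul_sum,
    ← Finset.mul_sum]

lemma lap_sum {f : Fin 3 → (Fin 3 → ℝ) → ℝ} (hf : ∀ i, ContDiff ℝ 2 (f i))
    (x : Fin 3 → ℝ) :
    lap (fun y => ∑ i, f i y) x = ∑ i, lap (f i) x := by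
  have hfd : ∀ i, Differentiable ℝ (f i) := fun i => (hf i).differentiable two_ne_zero
  have key : ∀ k : Fin 3, pd k (fun y => pd k (fun z => ∑ i, f i z) y) x
      = ∑ i, pd k (fun y => pd k (f i) y) x := by
    intro k
    have e1 : (fun y => pd k (fun z => ∑ i, f i z) y) = fun y => ∑ i, pd k (f i) y :=
      funext fun y => pd_sum hfd k y
    rw [e1, pd_sum (fun i => (pd_cd (hf i) k).differentiable one_ne_zero)]
  unfold lap
  rw [Finset.sum_congr rfl fun k _ => key k, Finset.sum_comm]

lemma lap_sub_const {f : (Fin 3 → ℝ) → ℝ} (hf : Differentiable ℝ f) (c : ℝ)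
    (x : Fin 3 → ℝ) :
    lap (fun y => f y - c) x = lap f x := by
  have e1 : ∀ k : Fin 3, (fun y => pd k (fun z => f z - c) y) = fun y => pd k f y := by
    intro k
    funext y
    have : (fun z => f z - c) = fun z => f z + (-c) := by funext z; ring
    rw [this, pd_add hf (differentiable_const _), pd_const]
    ring
  unfold lap
  exact Finset.sum_congr rfl fun k _ => by rw [e1 k]

lemma pd_sub_const {f : (Fin 3 → ℝ) → ℝ} (hf : Differentiable ℝ f) (c : ℝ)
    (k : Fin 3) (y : Fin 3 → ℝ) :
    pd k (fun z => f z - c) y = pd k f y := by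
  have : (fun z => f z - c) = fun z => f z + (-c) := by funext z; ring
  rw [this, pd_add hf (differentiable_const _), pd_const]
  ring

set_option maxHeartbeats 4000000 in
theorem stmt_12 (L a2 b2 c2 : ℝ) (hL : 0 < L) (ha : 0 < a2) (hb : 0 < b2) (hc : 0 < c2)
    (s : (Fin 3 → ℝ) → ℝ) (n : Fin 3 → (Fin 3 → ℝ) → ℝ)
    (hsC2 : ContDiff ℝ 2 s) (hnC2 : ∀ j, ContDiff ℝ 2 (n j))
    (hunit : ∀ y, (∑ j, n j y * n j y) = 1)
    (Q : Fin 3 → Fin 3 → (Fin 3 → ℝ) → ℝ)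
    (hQ : ∀ i j y, Q i j y = s y * (n i y * n j y - (if i = j then (1:ℝ)/3 else 0)))
    (x : Fin 3 → ℝ) (hsx : s x ≠ 0)
    (heq : ∀ i j, L * lap (Q i j) x =
      (1/3) * (2 * c2 * (s x) ^ 2 - b2 * s x - 3 * a2) * Q i j x) :
    (∀ j, 2 * (∑ k, pd k s x * pd k (n j) x) + s x * lap (n j) x +
        s x * (∑ j', ∑ k, (pd k (n j') x) ^ 2) * n j x = 0) ∧
    (∀ j, (∑ k, pd k (fun y => (s y) ^ 2 * pd k (n j) y) x) +
        (s x) ^ 2 * (∑ j', ∑ k, (pd k (n j') x) ^ 2) * n j x = 0) := by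
  have hsd : Differentiable ℝ s := hsC2.differentiable two_ne_zero
  have hnd : ∀ j, Differentiable ℝ (n j) := fun j => (hnC2 j).differentiable two_ne_zero
  have hQl : ∀ i j : Fin 3, lap (Q i j) x
      = lap s x * (n i x * n j x - (if i = j then (1:ℝ)/3 else 0))
        + 2 * ∑ k, pd k s x * (pd k (n i) x * n j x + n i x * pd k (n j) x)
        + s x * (lap (n i) x * n j x + n i x * lap (n j) x
            + 2 * ∑ k, pd k (n i) x * pd k (n j) x) := by
    intro i j
    have hgg : ContDiff ℝ 2 fun z => n i z * n j z := (hnC2 i).mul (hnC2 j)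
    have hggd : Differentiable ℝ fun z => n i z * n j z := hgg.differentiable two_ne_zero
    have hg : ContDiff ℝ 2 fun z => n i z * n j z - (if i = j then (1:ℝ)/3 else 0) :=
      hgg.sub contDiff_const
    have hQf : Q i j = fun y => s y * (n i y * n j y - (if i = j then (1:ℝ)/3 else 0)) :=
      funext fun y => hQ i j y
    rw [hQf, lap_mul hsC2 hg, lap_sub_const hggd, lap_mul (hnC2 i) (hnC2 j)]
    simp only [pd_sub_const hggd, pd_mul (hnd i) (hnd j)]
    ring
  have H : ∀ i j : Fin 3, L * (lap s x * (n i x * n j x - (if i = j then (1:ℝ)/3 else 0))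
      + 2 * (pd 0 s x * (pd 0 (n i) x * n j x + n i x * pd 0 (n j) x) + pd 1 s x * (pd 1 (n i) x * n j x + n i x * pd 1 (n j) x) + pd 2 s x * (pd 2 (n i) x * n j x + n i x * pd 2 (n j) x))
      + s x * (lap (n i) x * n j x + n i x * lap (n j) x
          + 2 * (pd 0 (n i) x * pd 0 (n j) x + pd 1 (n i) x * pd 1 (n j) x + pd 2 (n i) x * pd 2 (n j) x)))
      = ((1/3) * (2 * c2 * s x ^ 2 - b2 * s x - 3 * a2)) * (s x * (n i x * n j x - (if i = j then (1:ℝ)/3 else 0))) := by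
    intro i j
    have h1 := heq i j
    rw [hQl i j, hQ i j x] at h1
    simp only [Fin.sum_univ_three] at h1
    linear_combination h1
  have H00 := H 0 0
  rw [if_pos rfl] at H00
  have H01 := H 0 1
  rw [if_neg (show ¬(0:Fin 3) = 1 by decide)] at H01
  have H02 := H 0 2
  rw [if_neg (show ¬(0:Fin 3) = 2 by decide)] at H02
  have H10 := H 1 0
  rw [if_neg (show ¬(1:Fin 3) = 0 by decide)] at H10
  have H11 := H 1 1
  rw [if_pos rfl] at H11
  have H12 := H 1 2
  rw [if_neg (show ¬(1:Fin 3) = 2 by decide)] at H12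
  have H20 := H 2 0
  rw [if_neg (show ¬(2:Fin 3) = 0 by decide)] at H20
  have H21 := H 2 1
  rw [if_neg (show ¬(2:Fin 3) = 1 by decide)] at H21
  have H22 := H 2 2
  rw [if_pos rfl] at H22
  have hP : (n 0 x * n 0 x + n 1 x * n 1 x + n 2 x * n 2 x) = 1 := by
    have h1 := hunit x
    simp only [Fin.sum_univ_three] at h1
    linarith
  have hOy : ∀ k : Fin 3, (∑ i : Fin 3, (pd k (n i) x * n i x + n i x * pd k (n i) x)) = 0 := by
    intro k
    have h1 : pd k (fun z => ∑ i : Fin 3, n i z * n i z) x = 0 := by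
      rw [show (fun z => ∑ i : Fin 3, n i z * n i z) = fun _ => (1:ℝ) from funext hunit,
        pd_const]
    rw [pd_sum (f := fun i z => n i z * n i z) (fun i => (hnd i).mul (hnd i)),
      Finset.sum_congr rfl (fun i _ => pd_mul (hnd i) (hnd i) k x)] at h1
    exact h1
  have hO0 : (n 0 x * pd 0 (n 0) x + n 1 x * pd 0 (n 1) x + n 2 x * pd 0 (n 2) x) = 0 := by
    have h1 := hOy 0
    simp only [Fin.sum_univ_three] at h1
    linarith
  have hO1 : (n 0 x * pd 1 (n 0) x + n 1 x * pd 1 (n 1) x + n 2 x * pd 1 (n 2) x) = 0 := by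
    have h1 := hOy 1
    simp only [Fin.sum_univ_three] at h1
    linarith
  have hO2 : (n 0 x * pd 2 (n 0) x + n 1 x * pd 2 (n 1) x + n 2 x * pd 2 (n 2) x) = 0 := by
    have h1 := hOy 2
    simp only [Fin.sum_univ_three] at h1
    linarith
  have hRs : (∑ i : Fin 3, (lap (n i) x * n i x
      + 2 * ∑ k, pd k (n i) x * pd k (n i) x + n i x * lap (n i) x)) = 0 := by
    have h1 : lap (fun z => ∑ i : Fin 3, n i z * n i z) x = 0 := by
      rw [show (fun z => ∑ i : Fin 3, n i z * n i z) = fun _ => (1:ℝ) from funext hunit]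
      unfold lap
      simp [pd_const]
    rw [lap_sum (fun i => (hnC2 i).mul (hnC2 i)),
      Finset.sum_congr rfl (fun i _ => lap_mul (hnC2 i) (hnC2 i) x)] at h1
    exact h1
  have hRx : ((lap (n 0) x * n 0 x + 2 * (pd 0 (n 0) x * pd 0 (n 0) x + pd 1 (n 0) x * pd 1 (n 0) x + pd 2 (n 0) x * pd 2 (n 0) x) + n 0 x * lap (n 0) x) + (lap (n 1) x * n 1 x + 2 * (pd 0 (n 1) x * pd 0 (n 1) x + pd 1 (n 1) x * pd 1 (n 1) x + pd 2 (n 1) x * pd 2 (n 1) x) + n 1 x * lap (n 1) x) + (lap (n 2) x * n 2 x + 2 * (pd 0 (n 2) x * pd 0 (n 2) x + pd 1 (n 2) x * pd 1 (n 2) x + pd 2 (n 2) x * pd 2 (n 2) x) + n 2 x * lap (n 2) x)) = 0 := by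
    have h1 := hRs
    simp only [Fin.sum_univ_three] at h1
    linarith
  have key1 : ∀ j : Fin 3, 2 * (pd 0 s x * pd 0 (n j) x + pd 1 s x * pd 1 (n j) x + pd 2 s x * pd 2 (n j) x) + s x * lap (n j) x + s x * (pd 0 (n 0) x * pd 0 (n 0) x + pd 1 (n 0) x * pd 1 (n 0) x + pd 2 (n 0) x * pd 2 (n 0) x + pd 0 (n 1) x * pd 0 (n 1) x + pd 1 (n 1) x * pd 1 (n 1) x + pd 2 (n 1) x * pd 2 (n 1) x + pd 0 (n 2) x * pd 0 (n 2) x + pd 1 (n 2) x * pd 1 (n 2) x + pd 2 (n 2) x * pd 2 (n 2) x) * n j x = 0 := by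
    intro j
    fin_cases j
    · show 2 * (pd 0 s x * pd 0 (n 0) x + pd 1 s x * pd 1 (n 0) x + pd 2 s x * pd 2 (n 0) x) + s x * lap (n 0) x + s x * (pd 0 (n 0) x * pd 0 (n 0) x + pd 1 (n 0) x * pd 1 (n 0) x + pd 2 (n 0) x * pd 2 (n 0) x + pd 0 (n 1) x * pd 0 (n 1) x + pd 1 (n 1) x * pd 1 (n 1) x + pd 2 (n 1) x * pd 2 (n 1) x + pd 0 (n 2) x * pd 0 (n 2) x + pd 1 (n 2) x * pd 1 (n 2) x + pd 2 (n 2) x * pd 2 (n 2) x) * n 0 x = 0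
      have hz : L * (2 * (pd 0 s x * pd 0 (n 0) x + pd 1 s x * pd 1 (n 0) x + pd 2 s x * pd 2 (n 0) x) + s x * lap (n 0) x + s x * (pd 0 (n 0) x * pd 0 (n 0) x + pd 1 (n 0) x * pd 1 (n 0) x + pd 2 (n 0) x * pd 2 (n 0) x + pd 0 (n 1) x * pd 0 (n 1) x + pd 1 (n 1) x * pd 1 (n 1) x + pd 2 (n 1) x * pd 2 (n 1) x + pd 0 (n 2) x * pd 0 (n 2) x + pd 1 (n 2) x * pd 1 (n 2) x + pd 2 (n 2) x * pd 2 (n 2) x) * n 0 x) = 0 := by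
        linear_combination (n 0 x) * H00 + (n 1 x) * H10 + (n 2 x) * H20 - (n 0 x * (n 0 x * n 0 x)) * H00 - (n 0 x * (n 0 x * n 1 x)) * H01 - (n 0 x * (n 0 x * n 2 x)) * H02 - (n 0 x * (n 1 x * n 0 x)) * H10 - (n 0 x * (n 1 x * n 1 x)) * H11 - (n 0 x * (n 1 x * n 2 x)) * H12 - (n 0 x * (n 2 x * n 0 x)) * H20 - (n 0 x * (n 2 x * n 1 x)) * H21 - (n 0 x * (n 2 x * n 2 x)) * H22 + (((n 0 x * n 0 x + n 1 x * n 1 x + n 2 x * n 2 x) - 1/3) * n 0 x * (L * lap s x - ((1/3) * (2 * c2 * s x ^ 2 - b2 * s x - 3 * a2)) * s x) - L * (2 * (pd 0 s x * pd 0 (n 0) x + pd 1 s x * pd 1 (n 0) x + pd 2 s x * pd 2 (n 0) x) + s x * lap (n 0) x + 2 * s x * (pd 0 (n 0) x * pd 0 (n 0) x + pd 1 (n 0) x * pd 1 (n 0) x + pd 2 (n 0) x * pd 2 (n 0) x + pd 0 (n 1) x * pd 0 (n 1) x + pd 1 (n 1) x * pd 1 (n 1) x + pd 2 (n 1) x *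 pd 2 (n 1) x + pd 0 (n 2) x * pd 0 (n 2) x + pd 1 (n 2) x * pd 1 (n 2) x + pd 2 (n 2) x * pd 2 (n 2) x) * n 0 x)) * hP + (L * (pd 0 s x * n 0 x * (4 * (n 0 x * n 0 x + n 1 x * n 1 x + n 2 x * n 2 x) - 2) - 2 * s x * pd 0 (n 0) x + 2 * s x * n 0 x * (n 0 x * pd 0 (n 0) x + n 1 x * pd 0 (n 1) x + n 2 x * pd 0 (n 2) x))) * hO0 + (L * (pd 1 s x * n 0 x * (4 * (n 0 x * n 0 x + n 1 x * n 1 x + n 2 x * n 2 x) - 2) - 2 * s x * pd 1 (n 0) x + 2 * s x * n 0 x * (n 0 x * pd 1 (n 0) x + n 1 x * pd 1 (n 1) x + n 2 x * pd 1 (n 2) x))) * hO1 + (L * (pd 2 s x * n 0 x * (4 * (n 0 x * n 0 x + n 1 x * n 1 x + n 2 x * n 2 x) - 2) - 2 * s x * pd 2 (n 0) x + 2 * s x * n 0 x * (n 0 x * pd 2 (n 0) x + n 1 x * pd 2 (n 1) x + n 2 x * pd 2 (n 2) x))) * hO2 + ((1/2) * (L * (- (s x) * n 0 x * (1 - 2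 * (n 0 x * n 0 x + n 1 x * n 1 x + n 2 x * n 2 x))))) * hRx
      exact (mul_eq_zero.mp hz).resolve_left hL.ne'
    · show 2 * (pd 0 s x * pd 0 (n 1) x + pd 1 s x * pd 1 (n 1) x + pd 2 s x * pd 2 (n 1) x) + s x * lap (n 1) x + s x * (pd 0 (n 0) x * pd 0 (n 0) x + pd 1 (n 0) x * pd 1 (n 0) x + pd 2 (n 0) x * pd 2 (n 0) x + pd 0 (n 1) x * pd 0 (n 1) x + pd 1 (n 1) x * pd 1 (n 1) x + pd 2 (n 1) x * pd 2 (n 1) x + pd 0 (n 2) x * pd 0 (n 2) x + pd 1 (n 2) x * pd 1 (n 2) x + pd 2 (n 2) x * pd 2 (n 2) x) * n 1 x = 0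
      have hz : L * (2 * (pd 0 s x * pd 0 (n 1) x + pd 1 s x * pd 1 (n 1) x + pd 2 s x * pd 2 (n 1) x) + s x * lap (n 1) x + s x * (pd 0 (n 0) x * pd 0 (n 0) x + pd 1 (n 0) x * pd 1 (n 0) x + pd 2 (n 0) x * pd 2 (n 0) x + pd 0 (n 1) x * pd 0 (n 1) x + pd 1 (n 1) x * pd 1 (n 1) x + pd 2 (n 1) x * pd 2 (n 1) x + pd 0 (n 2) x * pd 0 (n 2) x + pd 1 (n 2) x * pd 1 (n 2) x + pd 2 (n 2) x * pd 2 (n 2) x) * n 1 x) = 0 := by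
        linear_combination (n 0 x) * H01 + (n 1 x) * H11 + (n 2 x) * H21 - (n 1 x * (n 0 x * n 0 x)) * H00 - (n 1 x * (n 0 x * n 1 x)) * H01 - (n 1 x * (n 0 x * n 2 x)) * H02 - (n 1 x * (n 1 x * n 0 x)) * H10 - (n 1 x * (n 1 x * n 1 x)) * H11 - (n 1 x * (n 1 x * n 2 x)) * H12 - (n 1 x * (n 2 x * n 0 x)) * H20 - (n 1 x * (n 2 x * n 1 x)) * H21 - (n 1 x * (n 2 x * n 2 x)) * H22 + (((n 0 x * n 0 x + n 1 x * n 1 x + n 2 x * n 2 x) - 1/3) * n 1 x * (L * lap s x - ((1/3) * (2 * c2 * s x ^ 2 - b2 * s x - 3 * a2)) * s x) - L * (2 * (pd 0 s x * pd 0 (n 1) x + pd 1 s x * pd 1 (n 1) x + pd 2 s x * pd 2 (n 1) x) + s x * lap (n 1) x + 2 * s x * (pd 0 (n 0) x * pd 0 (n 0) x + pd 1 (n 0) x * pd 1 (n 0) x + pd 2 (n 0) x * pd 2 (n 0) x + pd 0 (n 1) x * pd 0 (n 1) x + pd 1 (n 1) x * pd 1 (n 1) x + pd 2 (n 1) x *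 pd 2 (n 1) x + pd 0 (n 2) x * pd 0 (n 2) x + pd 1 (n 2) x * pd 1 (n 2) x + pd 2 (n 2) x * pd 2 (n 2) x) * n 1 x)) * hP + (L * (pd 0 s x * n 1 x * (4 * (n 0 x * n 0 x + n 1 x * n 1 x + n 2 x * n 2 x) - 2) - 2 * s x * pd 0 (n 1) x + 2 * s x * n 1 x * (n 0 x * pd 0 (n 0) x + n 1 x * pd 0 (n 1) x + n 2 x * pd 0 (n 2) x))) * hO0 + (L * (pd 1 s x * n 1 x * (4 * (n 0 x * n 0 x + n 1 x * n 1 x + n 2 x * n 2 x) - 2) - 2 * s x * pd 1 (n 1) x + 2 * s x * n 1 x * (n 0 x * pd 1 (n 0) x + n 1 x * pd 1 (n 1) x + n 2 x * pd 1 (n 2) x))) * hO1 + (L * (pd 2 s x * n 1 x * (4 * (n 0 x * n 0 x + n 1 x * n 1 x + n 2 x * n 2 x) - 2) - 2 * s x * pd 2 (n 1) x + 2 * s x * n 1 x * (n 0 x * pd 2 (n 0) x + n 1 x * pd 2 (n 1) x + n 2 x * pd 2 (n 2) x))) * hO2 + ((1/2) * (L * (- (s x) * n 1 x * (1 - 2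 * (n 0 x * n 0 x + n 1 x * n 1 x + n 2 x * n 2 x))))) * hRx
      exact (mul_eq_zero.mp hz).resolve_left hL.ne'
    · show 2 * (pd 0 s x * pd 0 (n 2) x + pd 1 s x * pd 1 (n 2) x + pd 2 s x * pd 2 (n 2) x) + s x * lap (n 2) x + s x * (pd 0 (n 0) x * pd 0 (n 0) x + pd 1 (n 0) x * pd 1 (n 0) x + pd 2 (n 0) x * pd 2 (n 0) x + pd 0 (n 1) x * pd 0 (n 1) x + pd 1 (n 1) x * pd 1 (n 1) x + pd 2 (n 1) x * pd 2 (n 1) x + pd 0 (n 2) x * pd 0 (n 2) x + pd 1 (n 2) x * pd 1 (n 2) x + pd 2 (n 2) x * pd 2 (n 2) x) * n 2 x = 0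
      have hz : L * (2 * (pd 0 s x * pd 0 (n 2) x + pd 1 s x * pd 1 (n 2) x + pd 2 s x * pd 2 (n 2) x) + s x * lap (n 2) x + s x * (pd 0 (n 0) x * pd 0 (n 0) x + pd 1 (n 0) x * pd 1 (n 0) x + pd 2 (n 0) x * pd 2 (n 0) x + pd 0 (n 1) x * pd 0 (n 1) x + pd 1 (n 1) x * pd 1 (n 1) x + pd 2 (n 1) x * pd 2 (n 1) x + pd 0 (n 2) x * pd 0 (n 2) x + pd 1 (n 2) x * pd 1 (n 2) x + pd 2 (n 2) x * pd 2 (n 2) x) * n 2 x) = 0 := by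
        linear_combination (n 0 x) * H02 + (n 1 x) * H12 + (n 2 x) * H22 - (n 2 x * (n 0 x * n 0 x)) * H00 - (n 2 x * (n 0 x * n 1 x)) * H01 - (n 2 x * (n 0 x * n 2 x)) * H02 - (n 2 x * (n 1 x * n 0 x)) * H10 - (n 2 x * (n 1 x * n 1 x)) * H11 - (n 2 x * (n 1 x * n 2 x)) * H12 - (n 2 x * (n 2 x * n 0 x)) * H20 - (n 2 x * (n 2 x * n 1 x)) * H21 - (n 2 x * (n 2 x * n 2 x)) * H22 + (((n 0 x * n 0 x + n 1 x * n 1 x + n 2 x * n 2 x) - 1/3) * n 2 x * (L * lap s x - ((1/3) * (2 * c2 * s x ^ 2 - b2 * s x - 3 * a2)) * s x) - L * (2 * (pd 0 s x * pd 0 (n 2) x + pd 1 s x * pd 1 (n 2) x + pd 2 s x * pd 2 (n 2) x) + s x * lap (n 2) x + 2 * s x * (pd 0 (n 0) x * pd 0 (n 0) x + pd 1 (n 0) x * pd 1 (n 0) x + pd 2 (n 0) x * pd 2 (n 0) x + pd 0 (n 1) x * pd 0 (n 1) x + pd 1 (n 1) x * pd 1 (n 1) x + pd 2 (n 1) x *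 pd 2 (n 1) x + pd 0 (n 2) x * pd 0 (n 2) x + pd 1 (n 2) x * pd 1 (n 2) x + pd 2 (n 2) x * pd 2 (n 2) x) * n 2 x)) * hP + (L * (pd 0 s x * n 2 x * (4 * (n 0 x * n 0 x + n 1 x * n 1 x + n 2 x * n 2 x) - 2) - 2 * s x * pd 0 (n 2) x + 2 * s x * n 2 x * (n 0 x * pd 0 (n 0) x + n 1 x * pd 0 (n 1) x + n 2 x * pd 0 (n 2) x))) * hO0 + (L * (pd 1 s x * n 2 x * (4 * (n 0 x * n 0 x + n 1 x * n 1 x + n 2 x * n 2 x) - 2) - 2 * s x * pd 1 (n 2) x + 2 * s x * n 2 x * (n 0 x * pd 1 (n 0) x + n 1 x * pd 1 (n 1) x + n 2 x * pd 1 (n 2) x))) * hO1 + (L * (pd 2 s x * n 2 x * (4 * (n 0 x * n 0 x + n 1 x * n 1 x + n 2 x * n 2 x) - 2) - 2 * s x * pd 2 (n 2) x + 2 * s x * n 2 x * (n 0 x * pd 2 (n 0) x + n 1 x * pd 2 (n 1) x + n 2 x * pd 2 (n 2) x))) * hO2 + ((1/2) * (L * (- (s x) * n 2 x * (1 - 2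 * (n 0 x * n 0 x + n 1 x * n 1 x + n 2 x * n 2 x))))) * hRx
      exact (mul_eq_zero.mp hz).resolve_left hL.ne'
  constructor
  · intro j
    simp only [Fin.sum_univ_three]
    linear_combination key1 j
  · intro j
    have e : ∀ k : Fin 3, pd k (fun y => s y ^ 2 * pd k (n j) y) x
        = (pd k s x * s x + s x * pd k s x) * pd k (n j) x
          + (s x * s x) * pd k (fun y => pd k (n j) y) x := by
      intro k
      have hg : Differentiable ℝ fun y => pd k (n j) y :=
        (pd_cd (hnC2 j) k).differentiable one_ne_zero
      have hss : (fun y => s y ^ 2 * pd k (n j) y)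
          = fun y => (s y * s y) * pd k (n j) y := by
        funext y; ring
      rw [hss, pd_mul (f := fun y => s y * s y) (hsd.mul hsd) hg, pd_mul hsd hsd]
    have hp1 := key1 j
    simp only [lap, Fin.sum_univ_three] at hp1
    simp only [Fin.sum_univ_three]
    rw [e 0, e 1, e 2]
    linear_combination (s x) * hp1
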